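/- Let G = B wr X with B, X abelian, X torsion-free, H ≤ G of finite index, f : H → G a virtual endomorphism, A the base group, A_0 = A ∩ H, and L = f(A_0) ∩ A. If L is nontrivial, then f(A_0) ≤ A. -/

import Mathlib

lemma shift_fix_eq_zero {B X : Type*} [AddCommGroup B] [AddCommGroup X]
    (hX : ∀ g : X, g ≠ 0 → ¬IsOfFinAddOrder g) {x : X} (hx : x ≠ 0) {b : X →₀ B}
    (hb : ∀ y, b (y - x) = b y) : b = 0 := by
  by_contra h
  obtain ⟨y₀, hy₀⟩ : ∃ y, b y ≠ 0 := by
    by_contra h'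
    push_neg at h'
    exact h (Finsupp.ext h')
  have key : ∀ n : ℕ, b (y₀ + n • x) = b y₀ := by
    intro n
    induction n with
    | zero => simp
    | succ k ih =>
      have := hb (y₀ + (k + 1) • x)
      rw [succ_nsmul] at this ⊢
      rw [← this]
      rw [show y₀ + (k • x + x) - x = y₀ + k • x by abel]
      exact ih
  have hord : addOrderOf x = 0 := addOrderOf_eq_zero (hX x hx)
  have hinj : Function.Injective (fun n : ℕ => y₀ + n • x) := by
    intro n m hnm
    simp only [add_right_inj] at hnm
    by_contra hne
    rcases Nat.lt_or_ge n m with hlt | hge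
    · have : (m - n) • x = 0 := by
        rw [sub_nsmul _ hlt.le, hnm]; abel
      have : IsOfFinAddOrder x := isOfFinAddOrder_iff_nsmul_eq_zero.2 ⟨m - n, by omega, this⟩
      exact hX x hx this
    · have hlt' : m < n := lt_of_le_of_ne hge (Ne.symm hne)
      have : (n - m) • x = 0 := by
        rw [sub_nsmul _ hlt'.le, hnm]; abel
      have : IsOfFinAddOrder x := isOfFinAddOrder_iff_nsmul_eq_zero.2 ⟨n - m, by omega, this⟩
      exact hX x hx this
  have hinf : (↑b.support : Set X).Infinite :=
    Set.infinite_of_injective_forall_mem hinj (fun n => by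
      simp only [Finset.mem_coe, Finsupp.mem_support_iff, key n]
      exact hy₀)
  exact hinf b.support.finite_toSet

def shiftEquiv {B X : Type*} [AddCommGroup B] [AddCommGroup X] (x : X) :
    (X →₀ B) ≃+ (X →₀ B) := Finsupp.domCongr (Equiv.addRight x)

noncomputable def shiftHom (B X : Type*) [AddCommGroup B] [AddCommGroup X] :
    Multiplicative X →* Multiplicative (AddAut (X →₀ B)) :=
  MonoidHom.mk' (fun x => Multiplicative.ofAdd (shiftEquiv x.toAdd)) (by
    intro a b
    apply AddEquiv.ext
    intro f
    ext y
    change (shiftEquiv (a * b).toAdd f) y = (shiftEquiv a.toAdd (shiftEquiv b.toAdd f)) y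
    simp [shiftEquiv, Finsupp.domCongr, Equiv.Perm.mul_def, sub_eq_add_neg]
    congr 1
    abel)

noncomputable def wreathAct (B X : Type*) [AddCommGroup B] [AddCommGroup X] :
    Multiplicative X →* MulAut (Multiplicative (X →₀ B)) :=
  { toFun := fun x => AddEquiv.toMultiplicative (Multiplicative.toAdd (shiftHom B X x))
    map_one' := by ext f; simp
    map_mul' := by intro a b; ext f; simp }

abbrev Wreath (B X : Type*) [AddCommGroup B] [AddCommGroup X] :=
  SemidirectProduct (Multiplicative (X →₀ B)) (Multiplicative X) (wreathAct B X)

/-- `G = B wr X`, `X` torsion-free, `H ≤ G` of finite index, `f : H → G`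
a virtual endomorphism, `A` the base group, `A₀ = A ∩ H`, `L = f(A₀) ∩ A`.
If `L` is nontrivial then `f(A₀) ≤ A`. -/
theorem stmt14 {B X : Type*} [AddCommGroup B] [AddCommGroup X]
    (hX : ∀ g : X, g ≠ 0 → ¬IsOfFinAddOrder g)
    (H : Subgroup (Wreath B X)) [H.FiniteIndex] (f : H →* Wreath B X)
    (hL : Subgroup.map f
        (((SemidirectProduct.inl : Multiplicative (X →₀ B) →* Wreath B X).range).comap H.subtype)
        ⊓ (SemidirectProduct.inl : Multiplicative (X →₀ B) →* Wreath B X).range ≠ ⊥) :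
    Subgroup.map f
        (((SemidirectProduct.inl : Multiplicative (X →₀ B) →* Wreath B X).range).comap H.subtype)
      ≤ (SemidirectProduct.inl : Multiplicative (X →₀ B) →* Wreath B X).range := by
  set K := ((SemidirectProduct.inl : Multiplicative (X →₀ B) →* Wreath B X).range).comap
    H.subtype with hKdef
  have hcomm : ∀ a b : Wreath B X, a ∈ Subgroup.map f K → b ∈ Subgroup.map f K →
      a * b = b * a := by
    rintro _ _ ⟨k1, hk1, rfl⟩ ⟨k2, hk2, rfl⟩
    rw [← map_mul, ← map_mul]
    congr 1
    apply Subtype.ext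
    obtain ⟨b1, hb1⟩ := hk1
    obtain ⟨b2, hb2⟩ := hk2
    show H.subtype (k1 * k2) = H.subtype (k2 * k1)
    rw [map_mul, map_mul]
    show H.subtype k1 * H.subtype k2 = H.subtype k2 * H.subtype k1
    rw [← hb1, ← hb2, ← map_mul, ← map_mul, mul_comm]
  obtain ⟨⟨l, hl⟩, hlne⟩ := Subgroup.ne_bot_iff_exists_ne_one.1 hL
  obtain ⟨hlM, c, hc⟩ := hl
  have hlne' : l ≠ 1 := fun h => hlne (Subtype.ext h)
  have hcne : c ≠ 1 := by rintro rfl; exact hlne' (by rw [← hc, map_one])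
  intro g hg
  rw [SemidirectProduct.range_inl_eq_ker_rightHom, MonoidHom.mem_ker]
  show g.right = 1
  have hcm := hcomm g l hg hlM
  have hleft := congrArg SemidirectProduct.left hcm
  have hlleft : l.left = c := by rw [← hc]; rfl
  have hlright : l.right = 1 := by rw [← hc]; rfl
  rw [SemidirectProduct.mul_left, SemidirectProduct.mul_left, hlright, map_one,
    MulAut.one_apply, hlleft, mul_comm c g.left] at hleft
  have hfix : (wreathAct B X g.right) c = c := mul_left_cancel hleft
  have hfix' : shiftEquiv (Multiplicative.toAdd g.right) (Multiplicative.toAdd c)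
      = Multiplicative.toAdd c := congrArg Multiplicative.toAdd hfix
  by_contra hgr
  have hx : Multiplicative.toAdd g.right ≠ 0 := fun h => hgr (by
    rw [← ofAdd_toAdd g.right, h]; rfl)
  have hb : Multiplicative.toAdd c = 0 := by
    refine shift_fix_eq_zero hX hx (fun y => ?_)
    conv_rhs => rw [← hfix']
    simp [shiftEquiv, Finsupp.domCongr_apply, Finsupp.equivMapDomain_apply, sub_eq_add_neg]
  exact hcne (by rw [← ofAdd_toAdd c, hb]; rfl)
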